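/- Let r > 0, a < 0 and σ₁, σ₂ ∈ ℝ. Define a₁ = 3(r−a) − σ₁², a₂ = 2r(r−a) − (2a+σ₁²)(3r−a) − 2rσ₁σ₂, and a₃ = −2ar(2(r−a) − σ₁²) − 2r²(σ₁+σ₂)². If a₁ > 0, a₃ > 0 and a₁a₂ − a₃ > 0, then every λ ∈ ℂ with λ ≠ a−r, λ ≠ −2r and λ − (2a+σ₁²) − 2rσ₁σ₂/(λ+r−a) − 2r²σ₂²/((λ+r−a)(λ+2r)) = 0 satisfies Re λ < 0. -/

import Mathlib

open Complex

theorem stmt18 (r a σ₁ σ₂ : ℝ) (hr : 0 < r) (ha : a < 0)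
    (h1 : 0 < 3 * (r - a) - σ₁ ^ 2)
    (h3 : 0 < -2 * a * r * (2 * (r - a) - σ₁ ^ 2) - 2 * r ^ 2 * (σ₁ + σ₂) ^ 2)
    (h12 : (3 * (r - a) - σ₁ ^ 2) *
        (2 * r * (r - a) - (2 * a + σ₁ ^ 2) * (3 * r - a) - 2 * r * σ₁ * σ₂) -
        (-2 * a * r * (2 * (r - a) - σ₁ ^ 2) - 2 * r ^ 2 * (σ₁ + σ₂) ^ 2) > 0) :
    ∀ z : ℂ, z ≠ (a : ℂ) - (r : ℂ) → z ≠ -2 * (r : ℂ) →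
      z - ((2 * a + σ₁ ^ 2 : ℝ) : ℂ) -
          ((2 * r * σ₁ * σ₂ : ℝ) : ℂ) / (z + (r : ℂ) - (a : ℂ)) -
          ((2 * r ^ 2 * σ₂ ^ 2 : ℝ) : ℂ) /
            ((z + (r : ℂ) - (a : ℂ)) * (z + 2 * (r : ℂ))) = 0 →
      z.re < 0 := by
  intro z hz1 hz2 heq
  set A1 : ℝ := 3 * (r - a) - σ₁ ^ 2 with hA1
  set A2 : ℝ := 2 * r * (r - a) - (2 * a + σ₁ ^ 2) * (3 * r - a) - 2 * r * σ₁ * σ₂ with hA2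
  set A3 : ℝ := -2 * a * r * (2 * (r - a) - σ₁ ^ 2) - 2 * r ^ 2 * (σ₁ + σ₂) ^ 2 with hA3
  have hd : z + (r : ℂ) - (a : ℂ) ≠ 0 := by
    intro h
    apply hz1
    linear_combination h
  have he : z + 2 * (r : ℂ) ≠ 0 := by
    intro h
    apply hz2
    linear_combination h
  have hcubic : z ^ 3 + (A1 : ℂ) * z ^ 2 + (A2 : ℂ) * z + (A3 : ℂ) = 0 := by
    have hmul : (z + (r : ℂ) - (a : ℂ)) *
        (z ^ 3 + (A1 : ℂ) * z ^ 2 + (A2 : ℂ) * z + (A3 : ℂ)) = 0 := by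
      have k1 : ((2 * r * σ₁ * σ₂ : ℝ) : ℂ) / (z + (r : ℂ) - (a : ℂ)) * (z + (r : ℂ) - (a : ℂ))
          = ((2 * r * σ₁ * σ₂ : ℝ) : ℂ) := div_mul_cancel₀ _ hd
      have k2 : ((2 * r ^ 2 * σ₂ ^ 2 : ℝ) : ℂ) / ((z + (r : ℂ) - (a : ℂ)) * (z + 2 * (r : ℂ)))
          * ((z + (r : ℂ) - (a : ℂ)) * (z + 2 * (r : ℂ))) = ((2 * r ^ 2 * σ₂ ^ 2 : ℝ) : ℂ) :=
        div_mul_cancel₀ _ (mul_ne_zero hd he)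
      rw [hA1, hA2, hA3]
      push_cast at heq k1 k2 ⊢
      linear_combination (z + (r : ℂ) - (a : ℂ)) * (z + (r : ℂ) - (a : ℂ)) * (z + 2 * (r : ℂ)) * heq
        + (z + (r : ℂ) - (a : ℂ)) * (z + 2 * (r : ℂ)) * k1 + (z + (r : ℂ) - (a : ℂ)) * k2
    exact (mul_eq_zero.mp hmul).resolve_left hd
  set x := z.re with hx
  set y := z.im with hy
  have hre : x ^ 3 - 3 * x * y ^ 2 + A1 * (x ^ 2 - y ^ 2) + A2 * x + A3 = 0 := by
    have := congrArg Complex.re hcubic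
    simp only [Complex.add_re, Complex.mul_re, Complex.ofReal_re, Complex.ofReal_im,
      Complex.zero_re, pow_succ, pow_zero, one_mul, Complex.mul_im, Complex.zero_im] at this
    linarith [this]
  have him : y * (3 * x ^ 2 - y ^ 2 + 2 * A1 * x + A2) = 0 := by
    have := congrArg Complex.im hcubic
    simp only [Complex.add_im, Complex.mul_re, Complex.ofReal_re, Complex.ofReal_im,
      Complex.zero_re, pow_succ, pow_zero, one_mul, Complex.mul_im, Complex.zero_im] at this
    linarith [this]
  have hA1pos : 0 < A1 := h1
  have hA3pos : 0 < A3 := h3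
  have hA2pos : 0 < A2 := by nlinarith [h1, h3, h12]
  by_contra hxn
  push_neg at hxn
  rcases mul_eq_zero.mp him with hy0 | hQ
  · rw [hy0] at hre
    nlinarith [mul_nonneg (mul_nonneg hxn hxn) hxn, mul_nonneg hxn hxn]
  · have hy2 : y ^ 2 = 3 * x ^ 2 + 2 * A1 * x + A2 := by linarith
    have key : 8 * x ^ 3 + 8 * A1 * x ^ 2 + 2 * (A2 + A1 ^ 2) * x + (A1 * A2 - A3) = 0 := by
      linear_combination (-1 : ℝ) * hre + (3 * x + A1) * hQ
    nlinarith [mul_nonneg (mul_nonneg hxn hxn) hxn, mul_nonneg hxn hxn,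
      mul_nonneg hA2pos.le hxn, mul_nonneg (mul_nonneg hA1pos.le hA1pos.le) hxn,
      mul_nonneg hA1pos.le (mul_nonneg hxn hxn)]
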